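/- Let n ≥ 1, let x ∈ ℂⁿ be nonzero and y ∈ ℂⁿ. Then (a) there exists a skew-Hermitian matrix S ∈ ℂ^{n×n} (S* = −S) with Sx = y if and only if x*y is purely imaginary (Re(x*y) = 0); and (b) if Re(x*y) = 0, then every skew-Hermitian S with Sx = y satisfies ‖S‖ ≥ ‖y‖/‖x‖, and there exists a skew-Hermitian S with Sx = y and ‖S‖ = ‖y‖/‖x‖; that is, min{‖S‖ : S ∈ ℂ^{n×n}, S* = −S, Sx = y} = ‖y‖/‖x‖. -/

import Mathlib

open Matrix
open scoped ComplexOrder ENNReal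

noncomputable section

/-- Euclidean norm of a complex vector. -/
def vecNorm {ι : Type*} [Fintype ι] (x : ι → ℂ) : ℝ :=
  Real.sqrt (∑ i, Complex.normSq (x i))

/-- Spectral norm (largest singular value; the ℓ²→ℓ² operator norm). -/
def specNorm {ι κ : Type*} [Fintype ι] [Fintype κ] [DecidableEq κ] (A : Matrix ι κ ℂ) : ℝ :=
  ‖(Matrix.toEuclideanLin A).toContinuousLinearMap‖

lemma vecNorm_nonneg {n : ℕ} (v : Fin n → ℂ) : 0 ≤ vecNorm v := Real.sqrt_nonneg _

lemma vecNorm_sq {n : ℕ} (v : Fin n → ℂ) : vecNorm v ^ 2 = ∑ i, Complex.normSq (v i) := by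
  rw [vecNorm, Real.sq_sqrt]
  exact Finset.sum_nonneg fun i _ => Complex.normSq_nonneg _

lemma dp_self {n : ℕ} (v : Fin n → ℂ) : star v ⬝ᵥ v = ((vecNorm v ^ 2 : ℝ) : ℂ) := by
  rw [vecNorm_sq]
  push_cast
  simp [dotProduct, Complex.normSq_eq_conj_mul_self]

lemma vecNorm_pos {n : ℕ} {v : Fin n → ℂ} (hv : v ≠ 0) : 0 < vecNorm v := by
  rcases (vecNorm_nonneg v).lt_or_eq with h | h
  · exact h
  · exfalso; apply hv
    have h2 : ∑ i, Complex.normSq (v i) = 0 := by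
      have := vecNorm_sq v; rw [← h] at this; simpa using this.symm
    funext i
    have := (Finset.sum_eq_zero_iff_of_nonneg (fun i _ => Complex.normSq_nonneg (v i))).mp h2 i (by simp)
    simpa [Complex.normSq_eq_zero] using this

lemma vecNorm_smul {n : ℕ} (c : ℂ) (v : Fin n → ℂ) :
    vecNorm (c • v) = ‖c‖ * vecNorm v := by
  unfold vecNorm
  rw [← Real.sqrt_sq (norm_nonneg c), ← Real.sqrt_mul (by positivity), Finset.mul_sum]
  refine congrArg Real.sqrt (Finset.sum_congr rfl fun i _ => ?_)
  simp [Complex.normSq_mul, Complex.sq_norm]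

lemma euclid_norm {n : ℕ} (v : Fin n → ℂ) :
    ‖(WithLp.equiv 2 (Fin n → ℂ)).symm v‖ = vecNorm v := by
  rw [EuclideanSpace.norm_eq, vecNorm]
  refine congrArg Real.sqrt (Finset.sum_congr rfl fun i _ => ?_)
  simp [Complex.sq_norm]

lemma vecMulVec_mulVec {n : ℕ} (a b v : Fin n → ℂ) :
    vecMulVec a b *ᵥ v = (b ⬝ᵥ v) • a := by
  funext i
  simp only [vecMulVec, mulVec, dotProduct, of_apply, Pi.smul_apply, smul_eq_mul,
    Finset.sum_mul]
  exact Finset.sum_congr rfl fun j _ => by ring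

lemma dp_self_re_nonneg {n : ℕ} (v : Fin n → ℂ) : 0 ≤ (star v ⬝ᵥ v).re := by
  rw [dp_self]; norm_cast; positivity

lemma bessel1 {n : ℕ} (p v : Fin n → ℂ) (hpp : star p ⬝ᵥ p = 1) :
    Complex.normSq (star p ⬝ᵥ v) ≤ vecNorm v ^ 2 := by
  set a := star p ⬝ᵥ v with ha
  have hvp : star v ⬝ᵥ p = starRingEnd ℂ a := by rw [star_dotProduct]; rfl
  have key : star (v - a • p) ⬝ᵥ (v - a • p)
      = star v ⬝ᵥ v - (Complex.normSq a : ℂ) := by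
    simp only [star_sub, star_smul, sub_dotProduct, dotProduct_sub, dotProduct_smul,
      smul_dotProduct, hpp, hvp, ← ha, smul_eq_mul, mul_one]
    rw [Complex.normSq_eq_conj_mul_self]
    push_cast
    ring_nf
  have h0 := dp_self_re_nonneg (v - a • p)
  rw [key] at h0
  rw [dp_self] at h0
  simp at h0
  norm_cast at h0

lemma bessel2 {n : ℕ} (p q v : Fin n → ℂ) (hpp : star p ⬝ᵥ p = 1)
    (hqq : star q ⬝ᵥ q = 1) (hpq : star p ⬝ᵥ q = 0) :
    Complex.normSq (star p ⬝ᵥ v) + Complex.normSq (star q ⬝ᵥ v) ≤ vecNorm v ^ 2 := by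
  set a := star p ⬝ᵥ v with ha
  set b := star q ⬝ᵥ v with hb
  have hvp : star v ⬝ᵥ p = starRingEnd ℂ a := by rw [star_dotProduct]; rfl
  have hvq : star v ⬝ᵥ q = starRingEnd ℂ b := by rw [star_dotProduct]; rfl
  have hqp : star q ⬝ᵥ p = 0 := by
    rw [star_dotProduct, hpq]; simp
  have key : star (v - a • p - b • q) ⬝ᵥ (v - a • p - b • q)
      = star v ⬝ᵥ v - (Complex.normSq a : ℂ) - (Complex.normSq b : ℂ) := by
    simp only [star_sub, star_smul, sub_dotProduct, dotProduct_sub, dotProduct_smul,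
      smul_dotProduct, hpp, hqq, hpq, hqp, hvp, hvq, ← ha, ← hb, smul_eq_mul, mul_one, mul_zero]
    rw [Complex.normSq_eq_conj_mul_self, Complex.normSq_eq_conj_mul_self]
    push_cast
    ring_nf
  have h0 := dp_self_re_nonneg (v - a • p - b • q)
  rw [key] at h0
  rw [dp_self] at h0
  simp at h0
  norm_cast at h0
  linarith

lemma toEuclideanLin_apply' {n : ℕ} (A : Matrix (Fin n) (Fin n) ℂ)
    (v : EuclideanSpace ℂ (Fin n)) :
    Matrix.toEuclideanLin A v = (WithLp.equiv 2 (Fin n → ℂ)).symm (A *ᵥ (WithLp.equiv 2 _ v)) := by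
  simp [Matrix.toEuclideanLin]
  rfl

lemma specNorm_le {n : ℕ} (A : Matrix (Fin n) (Fin n) ℂ) {r : ℝ} (hr : 0 ≤ r)
    (h : ∀ v : Fin n → ℂ, vecNorm (A *ᵥ v) ≤ r * vecNorm v) : specNorm A ≤ r := by
  apply ContinuousLinearMap.opNorm_le_bound _ hr
  intro v
  rw [LinearMap.coe_toContinuousLinearMap', toEuclideanLin_apply', euclid_norm]
  have : ‖v‖ = vecNorm (WithLp.equiv 2 _ v) := by
    rw [← euclid_norm]; rfl
  rw [this]
  exact h _

set_option synthInstance.maxHeartbeats 1000000 in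
lemma specNorm_mulVec_le {n : ℕ} (A : Matrix (Fin n) (Fin n) ℂ) (v : Fin n → ℂ) :
    vecNorm (A *ᵥ v) ≤ specNorm A * vecNorm v := by
  have h := (Matrix.toEuclideanLin A).toContinuousLinearMap.le_opNorm
    ((WithLp.equiv 2 (Fin n → ℂ)).symm v)
  rw [LinearMap.coe_toContinuousLinearMap', toEuclideanLin_apply'] at h
  simp only [Equiv.apply_symm_apply] at h
  rw [euclid_norm, euclid_norm] at h
  exact h

/-- sqrt comparison helper -/
lemma my_sqle {a b : ℝ} (ha : 0 ≤ a) (hb : 0 ≤ b) (h : a ^ 2 ≤ b ^ 2) : a ≤ b := by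
  nlinarith

def Smat2 {n : ℕ} (l m : ℝ) (p q : Fin n → ℂ) : Matrix (Fin n) (Fin n) ℂ :=
  (Complex.I * l) • vecMulVec p (star p) + (Complex.I * m) • vecMulVec q (star q)

lemma Smat2_skew {n : ℕ} (l m : ℝ) (p q : Fin n → ℂ) :
    (Smat2 l m p q)ᴴ = -(Smat2 l m p q) := by
  ext i j
  simp [Smat2, conjTranspose_apply, vecMulVec, Complex.ext_iff]
  ring_nf
  try tauto

lemma Smat2_mulVec {n : ℕ} (l m : ℝ) (p q v : Fin n → ℂ) :
    Smat2 l m p q *ᵥ v = (Complex.I * l * (star p ⬝ᵥ v)) • p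
      + (Complex.I * m * (star q ⬝ᵥ v)) • q := by
  simp [Smat2, add_mulVec, smul_mulVec, _root_.vecMulVec_mulVec, smul_smul]

lemma Smat2_norm_le {n : ℕ} {r : ℝ} (l m : ℝ) (p q : Fin n → ℂ)
    (hpp : star p ⬝ᵥ p = 1) (hqq : star q ⬝ᵥ q = 1) (hpq : star p ⬝ᵥ q = 0)
    (hr : 0 ≤ r) (hl : |l| ≤ r) (hm : |m| ≤ r) :
    specNorm (Smat2 l m p q) ≤ r := by
  apply specNorm_le _ hr
  intro v
  set a := star p ⬝ᵥ v with ha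
  set b := star q ⬝ᵥ v with hb
  have hqp : star q ⬝ᵥ p = 0 := by rw [star_dotProduct, hpq]; simp
  set w := Smat2 l m p q *ᵥ v with hw
  have key : star w ⬝ᵥ w
      = ((l ^ 2 * Complex.normSq a + m ^ 2 * Complex.normSq b : ℝ) : ℂ) := by
    rw [hw, Smat2_mulVec]
    simp only [star_add, star_smul, add_dotProduct, dotProduct_add, smul_dotProduct,
      dotProduct_smul, hpp, hqq, hpq, hqp, ← ha, ← hb, smul_eq_mul, mul_one, mul_zero]
    push_cast
    rw [Complex.normSq_eq_conj_mul_self, Complex.normSq_eq_conj_mul_self]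
    simp [Complex.star_def, _root_.map_mul, Complex.conj_I, Complex.conj_ofReal]
    linear_combination (-(l:ℂ)^2 * a * (starRingEnd ℂ) a - (m:ℂ)^2 * b * (starRingEnd ℂ) b) * Complex.I_sq
  have hsq : vecNorm w ^ 2 = l ^ 2 * Complex.normSq a + m ^ 2 * Complex.normSq b := by
    have := dp_self w
    rw [key] at this
    exact_mod_cast this.symm
  apply my_sqle (vecNorm_nonneg _) (mul_nonneg hr (vecNorm_nonneg _))
  rw [hsq, mul_pow]
  have hbes := bessel2 p q v hpp hqq hpq
  have h1 : l ^ 2 ≤ r ^ 2 := by nlinarith [abs_nonneg l, sq_abs l]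
  have h2 : m ^ 2 ≤ r ^ 2 := by nlinarith [abs_nonneg m, sq_abs m]
  nlinarith [Complex.normSq_nonneg a, Complex.normSq_nonneg b, sq_nonneg r]

def Smat1 {n : ℕ} (l : ℝ) (p : Fin n → ℂ) : Matrix (Fin n) (Fin n) ℂ :=
  (Complex.I * l) • vecMulVec p (star p)

lemma Smat1_skew {n : ℕ} (l : ℝ) (p : Fin n → ℂ) :
    (Smat1 l p)ᴴ = -(Smat1 l p) := by
  ext i j
  simp [Smat1, conjTranspose_apply, vecMulVec, Complex.ext_iff]
  ring_nf
  try tauto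

lemma Smat1_mulVec {n : ℕ} (l : ℝ) (p v : Fin n → ℂ) :
    Smat1 l p *ᵥ v = (Complex.I * l * (star p ⬝ᵥ v)) • p := by
  simp [Smat1, smul_mulVec, _root_.vecMulVec_mulVec, smul_smul]

lemma Smat1_norm_le {n : ℕ} {r : ℝ} (l : ℝ) (p : Fin n → ℂ)
    (hpp : star p ⬝ᵥ p = 1) (hr : 0 ≤ r) (hl : |l| ≤ r) :
    specNorm (Smat1 l p) ≤ r := by
  apply specNorm_le _ hr
  intro v
  set a := star p ⬝ᵥ v with ha
  set w := Smat1 l p *ᵥ v with hw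
  have key : star w ⬝ᵥ w = ((l ^ 2 * Complex.normSq a : ℝ) : ℂ) := by
    rw [hw, Smat1_mulVec]
    simp only [star_smul, smul_dotProduct, dotProduct_smul, hpp, ← ha, smul_eq_mul, mul_one]
    push_cast
    rw [Complex.normSq_eq_conj_mul_self]
    simp [Complex.star_def, _root_.map_mul, Complex.conj_I, Complex.conj_ofReal]
    linear_combination (-(l:ℂ)^2 * a * (starRingEnd ℂ) a) * Complex.I_sq
  have hsq : vecNorm w ^ 2 = l ^ 2 * Complex.normSq a := by
    have := dp_self w
    rw [key] at this
    exact_mod_cast this.symm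
  apply my_sqle (vecNorm_nonneg _) (mul_nonneg hr (vecNorm_nonneg _))
  rw [hsq, mul_pow]
  have hbes := bessel1 p v hpp
  have h1 : l ^ 2 ≤ r ^ 2 := by nlinarith [abs_nonneg l, sq_abs l]
  nlinarith [Complex.normSq_nonneg a, sq_nonneg r]

lemma skew_re_zero {n : ℕ} (S : Matrix (Fin n) (Fin n) ℂ) (hS : Sᴴ = -S) (x : Fin n → ℂ) :
    (star x ⬝ᵥ (S *ᵥ x)).re = 0 := by
  set cval := star x ⬝ᵥ (S *ᵥ x) with hc
  have h1 : (starRingEnd ℂ) cval = -cval := by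
    have h2 : star x ⬝ᵥ (S *ᵥ x) = star (star (S *ᵥ x) ⬝ᵥ x) := star_dotProduct _ _
    have h3 : star (S *ᵥ x) ⬝ᵥ x = star cval := by
      rw [hc, h2]; simp
    calc (starRingEnd ℂ) cval = star cval := rfl
    _ = star (S *ᵥ x) ⬝ᵥ x := h3.symm
    _ = (star x ᵥ* Sᴴ) ⬝ᵥ x := by rw [star_mulVec]
    _ = (star x ᵥ* (-S)) ⬝ᵥ x := by rw [hS]
    _ = -((star x ᵥ* S) ⬝ᵥ x) := by simp [Matrix.vecMul_neg]
    _ = -cval := by rw [hc, dotProduct_mulVec]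
  have := congrArg Complex.re h1
  simp [Complex.conj_re] at this
  linarith

lemma lower_bound {n : ℕ} (x y : Fin n → ℂ) (hx : x ≠ 0)
    (S : Matrix (Fin n) (Fin n) ℂ) (hSx : S *ᵥ x = y) :
    vecNorm y / vecNorm x ≤ specNorm S := by
  have hX : 0 < vecNorm x := vecNorm_pos hx
  have h := specNorm_mulVec_le S x
  rw [hSx] at h
  rw [div_le_iff₀ hX]
  exact h


set_option maxHeartbeats 2000000 in
lemma exists_good {n : ℕ} (x y : Fin n → ℂ) (hx : x ≠ 0) (hre : (star x ⬝ᵥ y).re = 0) :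
    ∃ S : Matrix (Fin n) (Fin n) ℂ, Sᴴ = -S ∧ S *ᵥ x = y ∧
      specNorm S ≤ vecNorm y / vecNorm x := by
  set X := vecNorm x with hXdef
  have hX : 0 < X := vecNorm_pos hx
  have hxx : star x ⬝ᵥ x = ((X ^ 2 : ℝ) : ℂ) := dp_self x
  set β : ℂ := (star x ⬝ᵥ y) / ((X ^ 2 : ℝ) : ℂ) with hβdef
  have hX2ne : ((X ^ 2 : ℝ) : ℂ) ≠ 0 := by
    simp only [ne_eq, Complex.ofReal_eq_zero]; positivity
  have hXCne : (X : ℂ) ≠ 0 := Complex.ofReal_ne_zero.mpr hX.ne'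
  have hβre : β.re = 0 := by
    rw [hβdef, Complex.div_ofReal_re, hre, zero_div]
  set t := β.im with htdef
  have hβ : β = (t : ℝ) * Complex.I := by
    have := Complex.re_add_im β
    rw [hβre] at this
    simpa using this.symm
  have hnsβ : Complex.normSq β = t ^ 2 := by
    rw [hβ]; simp [Complex.normSq_mul]; ring
  set z := y - β • x with hzdef
  have hy : y = z + β • x := by rw [hzdef]; abel
  have hxz : star x ⬝ᵥ z = 0 := by
    rw [hzdef, dotProduct_sub, dotProduct_smul, hxx, smul_eq_mul, hβdef]
    push_cast
    rw [div_mul_eq_mul_div, mul_div_assoc, div_self (pow_ne_zero 2 hXCne), mul_one, sub_self]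
  have hzx : star z ⬝ᵥ x = 0 := by
    rw [star_dotProduct, hxz]; simp
  have hzz : star z ⬝ᵥ z = ((vecNorm z ^ 2 : ℝ) : ℂ) := dp_self z
  -- Pythagoras
  have hyyC : ((vecNorm y ^ 2 : ℝ) : ℂ) = ((Complex.normSq β * X ^ 2 + vecNorm z ^ 2 : ℝ) : ℂ) := by
    rw [← dp_self y]
    conv_lhs => rw [hy]
    simp only [star_add, star_smul, add_dotProduct, dotProduct_add, smul_dotProduct,
      dotProduct_smul, hxz, hzx, hxx, hzz, smul_eq_mul, mul_zero, zero_mul]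
    push_cast
    rw [Complex.normSq_eq_conj_mul_self]
    simp only [Complex.star_def]
    ring
  have hyy : vecNorm y ^ 2 = t ^ 2 * X ^ 2 + vecNorm z ^ 2 := by
    have := Complex.ofReal_inj.mp hyyC
    rw [hnsβ] at this
    linarith
  by_cases hz0 : z = 0
  · -- y = β • x
    have hy' : y = β • x := by rw [hy, hz0]; simp
    set p : Fin n → ℂ := ((X⁻¹ : ℝ) : ℂ) • x with hpdef
    have hpp : star p ⬝ᵥ p = 1 := by
      rw [hpdef, star_smul, smul_dotProduct, dotProduct_smul, hxx]
      simp only [star_trivial, smul_eq_mul, Complex.star_def, Complex.conj_ofReal]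
      push_cast
      field_simp
    have hdpx : star p ⬝ᵥ x = (X : ℂ) := by
      rw [hpdef, star_smul, smul_dotProduct, hxx]
      simp only [star_trivial, smul_eq_mul, Complex.star_def, Complex.conj_ofReal]
      push_cast
      field_simp
    refine ⟨Smat1 t p, Smat1_skew t p, ?_, ?_⟩
    · rw [Smat1_mulVec, hdpx, hpdef, hy', hβ, smul_smul]
      congr 1
      push_cast
      field_simp
    · have hny : vecNorm y = |t| * X := by
        rw [hy', vecNorm_smul, hβ]
        congr 1
        simp
      apply Smat1_norm_le _ _ hpp
      · exact div_nonneg (vecNorm_nonneg y) hX.le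
      · rw [hny]; rw [mul_div_assoc, div_self hX.ne', mul_one]
  · -- z ≠ 0
    set Z := vecNorm z with hZdef
    have hZ : 0 < Z := vecNorm_pos hz0
    have hZCne : (Z : ℂ) ≠ 0 := Complex.ofReal_ne_zero.mpr hZ.ne'
    set c := Z / X with hcdef
    have hc : 0 < c := div_pos hZ hX
    have hcCne : (c : ℂ) ≠ 0 := Complex.ofReal_ne_zero.mpr hc.ne'
    set r := vecNorm y / X with hrdef
    have hr0 : 0 ≤ r := div_nonneg (vecNorm_nonneg y) hX.le
    have hr2 : r ^ 2 = t ^ 2 + c ^ 2 := by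
      rw [hrdef, hcdef, div_pow, div_pow, hyy]
      field_simp
    have hrpos : 0 < r := by nlinarith
    have hrCne : (r : ℂ) ≠ 0 := Complex.ofReal_ne_zero.mpr hrpos.ne'
    have hrt1 : |t| < r := by nlinarith [abs_nonneg t, sq_abs t]
    have habs := abs_lt.mp hrt1
    have hrmt : 0 < r - t := by linarith [habs.2]
    have hrpt : 0 < r + t := by linarith [habs.1]
    set N₁ := Real.sqrt (2 * r * (r - t)) with hN1def
    set N₂ := Real.sqrt (2 * r * (r + t)) with hN2def
    have hN1pos : 0 < N₁ := Real.sqrt_pos.mpr (by positivity)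
    have hN2pos : 0 < N₂ := Real.sqrt_pos.mpr (by positivity)
    have hN1sq : N₁ ^ 2 = 2 * r * (r - t) := Real.sq_sqrt (by positivity)
    have hN2sq : N₂ ^ 2 = 2 * r * (r + t) := Real.sq_sqrt (by positivity)
    have hN1Cne : (N₁ : ℂ) ≠ 0 := Complex.ofReal_ne_zero.mpr hN1pos.ne'
    have hN2Cne : (N₂ : ℂ) ≠ 0 := Complex.ofReal_ne_zero.mpr hN2pos.ne'
    have hN1C : ((N₁ : ℂ)) ^ 2 = 2 * (r : ℂ) * ((r : ℂ) - (t : ℂ)) := by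
      exact_mod_cast congrArg (Complex.ofReal) hN1sq
    have hN2C : ((N₂ : ℂ)) ^ 2 = 2 * (r : ℂ) * ((r : ℂ) + (t : ℂ)) := by
      exact_mod_cast congrArg (Complex.ofReal) hN2sq
    have hcC : ((c : ℂ)) ^ 2 = (r : ℂ) ^ 2 - (t : ℂ) ^ 2 := by
      have : c ^ 2 = r ^ 2 - t ^ 2 := by linarith
      exact_mod_cast congrArg (Complex.ofReal) this
    have hZC : (Z : ℂ) = (c : ℂ) * (X : ℂ) := by
      have hzr : Z = c * X := by rw [hcdef]; field_simp
      exact_mod_cast congrArg Complex.ofReal hzr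
    set u : Fin n → ℂ := ((X⁻¹ : ℝ) : ℂ) • x with hudef
    set w : Fin n → ℂ := ((Z⁻¹ : ℝ) : ℂ) • z with hwdef
    have huu : star u ⬝ᵥ u = 1 := by
      rw [hudef, star_smul, smul_dotProduct, dotProduct_smul, hxx]
      simp only [star_trivial, smul_eq_mul, Complex.star_def, Complex.conj_ofReal]
      push_cast
      field_simp
    have hww : star w ⬝ᵥ w = 1 := by
      rw [hwdef, star_smul, smul_dotProduct, dotProduct_smul, hzz]
      simp only [star_trivial, smul_eq_mul, Complex.star_def, Complex.conj_ofReal]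
      push_cast
      field_simp
    have huw : star u ⬝ᵥ w = 0 := by
      rw [hudef, hwdef, star_smul, smul_dotProduct, dotProduct_smul, hxz]
      simp
    have hwu : star w ⬝ᵥ u = 0 := by
      rw [hudef, hwdef, star_smul, smul_dotProduct, dotProduct_smul, hzx]
      simp
    have hux : star u ⬝ᵥ x = (X : ℂ) := by
      rw [hudef, star_smul, smul_dotProduct, hxx]
      simp only [star_trivial, smul_eq_mul, Complex.star_def, Complex.conj_ofReal]
      push_cast
      field_simp
    have hwx : star w ⬝ᵥ x = 0 := by
      rw [hwdef, star_smul, smul_dotProduct, hzx]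
      simp
    set p : Fin n → ℂ :=
      ((N₁⁻¹ : ℝ) : ℂ) • ((Complex.I * (c : ℂ)) • u + (((r - t : ℝ)) : ℂ) • w) with hpdef
    set q : Fin n → ℂ :=
      ((N₂⁻¹ : ℝ) : ℂ) • ((Complex.I * (c : ℂ)) • u - (((r + t : ℝ)) : ℂ) • w) with hqdef
    have hpp : star p ⬝ᵥ p = 1 := by
      rw [hpdef]
      simp only [star_smul, star_add, smul_dotProduct, dotProduct_smul, add_dotProduct,
        dotProduct_add, huu, hww, huw, hwu, smul_eq_mul, mul_one, mul_zero, star_mul',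
        Complex.star_def, Complex.conj_ofReal, Complex.conj_I, _root_.map_mul]
      push_cast
      field_simp
      linear_combination (-(c:ℂ)^2) * Complex.I_sq + hcC - hN1C
    have hqq : star q ⬝ᵥ q = 1 := by
      rw [hqdef]
      simp only [star_smul, star_sub, smul_dotProduct, dotProduct_smul, sub_dotProduct,
        dotProduct_sub, huu, hww, huw, hwu, smul_eq_mul, mul_one, mul_zero, star_mul',
        Complex.star_def, Complex.conj_ofReal, Complex.conj_I, _root_.map_mul]
      push_cast
      field_simp
      linear_combination (-(c:ℂ)^2) * Complex.I_sq + hcC - hN2C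
    have hpq : star p ⬝ᵥ q = 0 := by
      rw [hpdef, hqdef]
      simp only [star_smul, star_add, smul_dotProduct, dotProduct_smul, add_dotProduct,
        dotProduct_add, sub_dotProduct, dotProduct_sub, huu, hww, huw, hwu, smul_eq_mul,
        mul_one, mul_zero, star_mul', Complex.star_def, Complex.conj_ofReal, Complex.conj_I,
        _root_.map_mul]
      push_cast
      field_simp
      linear_combination (-(c:ℂ)^2) * Complex.I_sq + hcC
    have hdpx : star p ⬝ᵥ x = ((N₁⁻¹ : ℝ) : ℂ) * (-(Complex.I * (c : ℂ)) * (X : ℂ)) := by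
      rw [hpdef]
      simp only [star_smul, star_add, smul_dotProduct, add_dotProduct, hux, hwx,
        smul_eq_mul, mul_zero, add_zero, star_mul', Complex.star_def, Complex.conj_ofReal,
        Complex.conj_I, _root_.map_mul]
      ring
    have hdqx : star q ⬝ᵥ x = ((N₂⁻¹ : ℝ) : ℂ) * (-(Complex.I * (c : ℂ)) * (X : ℂ)) := by
      rw [hqdef]
      simp only [star_smul, star_sub, smul_dotProduct, sub_dotProduct, hux, hwx,
        smul_eq_mul, mul_zero, sub_zero, star_mul', Complex.star_def, Complex.conj_ofReal,
        Complex.conj_I, _root_.map_mul]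
      ring
    refine ⟨Smat2 r (-r) p q, Smat2_skew _ _ _ _, ?_, ?_⟩
    · rw [Smat2_mulVec, hdpx, hdqx, hpdef, hqdef, hy, hβ, hudef, hwdef, hzdef, hβ]
      match_scalars
      · push_cast
        field_simp
        rw [hN1C, hN2C, hZC]
        linear_combination (-4*Complex.I^2*(r:ℂ)^2*(c:ℂ)*(X:ℂ)*(t:ℂ)) * hcC
      · push_cast
        field_simp
        rw [hN1C, hN2C, hZC]
        linear_combination (4*(r:ℂ)^2*(c:ℂ)*(X:ℂ)*((t:ℂ)^2-(r:ℂ)^2)) * Complex.I_sq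
    · apply Smat2_norm_le r (-r) p q hpp hqq hpq hr0
      · rw [abs_of_nonneg hr0]
      · rw [abs_neg, abs_of_nonneg hr0]

/-- Skew-Hermitian mapping problem: for `x ≠ 0`, there is a skew-Hermitian `S`
(`Sᴴ = -S`) with `S x = y` iff `x* y` is purely imaginary, and in that case the minimum of
`‖S‖` (spectral norm) over all skew-Hermitian `S` with `S x = y` is `‖y‖ / ‖x‖`. -/
theorem skewHermitian_mapping {n : ℕ} (hn : 1 ≤ n) (x y : Fin n → ℂ) (hx : x ≠ 0) :
    ((∃ S : Matrix (Fin n) (Fin n) ℂ, Sᴴ = -S ∧ S *ᵥ x = y) ↔ (star x ⬝ᵥ y).re = 0) ∧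
    ((star x ⬝ᵥ y).re = 0 →
      IsLeast {c : ℝ | ∃ S : Matrix (Fin n) (Fin n) ℂ,
          Sᴴ = -S ∧ S *ᵥ x = y ∧ specNorm S = c}
        (vecNorm y / vecNorm x)) := by
  constructor
  · constructor
    · rintro ⟨S, hskew, hSx⟩
      rw [← hSx]
      exact skew_re_zero S hskew x
    · intro hre
      obtain ⟨S, h1, h2, _⟩ := exists_good x y hx hre
      exact ⟨S, h1, h2⟩
  · intro hre
    constructor
    · obtain ⟨S, h1, h2, h3⟩ := exists_good x y hx hre
      exact ⟨S, h1, h2, le_antisymm h3 (lower_bound x y hx S h2)⟩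
    · rintro cc ⟨S, hskew, hSx, rfl⟩
      exact lower_bound x y hx S hSx
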